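/- Let N ≥ 2, let E_1,…,E_N > 0 with E = Σ_n E_n, let V_E = Σ_n E_n²/E², and let D satisfy 0 ≤ D ≤ E. Then the function SC^DP : [0,1] → ℝ defined by SC^DP(α) = (1−α)·[ E²/2 + (D²/2)·( α² + V_E·(1−α)·α ) ] is strictly decreasing on [0,1]. -/

import Mathlib

/-- The equilibrium social cost
`SC^DP(α) = (1−α)[E²/2 + (D²/2)(α² + V_E (1−α) α)]` of the daily-proportional
mechanism is strictly decreasing in `α` on `[0,1]`. -/
theorem dp_social_cost_strictly_decreasing
    (N : ℕ) (hN : 2 ≤ N)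
    (En : Fin N → ℝ) (hEn : ∀ n, 0 < En n)
    (E VE : ℝ) (hE : E = ∑ n, En n)
    (hVE : VE = ∑ n, (En n) ^ 2 / E ^ 2)
    (D : ℝ) (hD : 0 ≤ D) (hDE : D ≤ E)
    (SC : ℝ → ℝ)
    (hSC : ∀ a, SC a =
      (1 - a) * (E ^ 2 / 2 + (D ^ 2 / 2) * (a ^ 2 + VE * (1 - a) * a))) :
    StrictAntiOn SC (Set.Icc (0 : ℝ) 1) := by
  have hN0 : 0 < N := by omega
  have hE0 : 0 < E := by
    rw [hE]
    exact Finset.sum_pos (fun i _ => hEn i) ⟨⟨0, hN0⟩, Finset.mem_univ _⟩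
  have hE2 : 0 < E ^ 2 := pow_pos hE0 2
  have hV0 : 0 < VE := by
    rw [hVE]
    exact Finset.sum_pos (fun i _ => div_pos (pow_pos (hEn i) 2) hE2)
      ⟨⟨0, hN0⟩, Finset.mem_univ _⟩
  -- each En n < E
  haveI : Nontrivial (Fin N) := Fin.nontrivial_iff_two_le.mpr hN
  have hlt : ∀ n, En n < E := by
    intro n
    obtain ⟨m, hm⟩ := exists_ne n
    rw [hE]
    exact Finset.single_lt_sum hm (Finset.mem_univ n) (Finset.mem_univ m) (hEn m)
      (fun k _ _ => (hEn k).le)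
  have hV1 : VE < 1 := by
    have hsum : (∑ n, (En n) ^ 2) < ∑ n, En n * E :=
      Finset.sum_lt_sum_of_nonempty ⟨⟨0, hN0⟩, Finset.mem_univ _⟩
        (fun n _ => by
          have := mul_lt_mul_of_pos_left (hlt n) (hEn n)
          nlinarith [hEn n, hlt n])
    have hsum2 : (∑ n, En n * E) = E ^ 2 := by
      rw [← Finset.sum_mul, ← hE]; ring
    have : VE = (∑ n, (En n) ^ 2) / E ^ 2 := by
      rw [hVE, Finset.sum_div]
    rw [this, div_lt_one hE2]
    exact hsum2 ▸ hsum
  have hDE2 : D ^ 2 ≤ E ^ 2 := by nlinarith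
  -- derivative
  have hfun : SC = fun a =>
      (1 - a) * (E ^ 2 / 2 + (D ^ 2 / 2) * (a ^ 2 + VE * (1 - a) * a)) :=
    funext hSC
  have hder : ∀ x : ℝ, HasDerivAt SC
      (-(E ^ 2 / 2) + (D ^ 2 / 2) *
        (VE + 2 * (1 - 2 * VE) * x - 3 * (1 - VE) * x ^ 2)) x := by
    intro x
    rw [hfun]
    have h1 : HasDerivAt (fun a : ℝ => 1 - a) (-1) x := (hasDerivAt_id x).const_sub 1
    have h2 : HasDerivAt (fun a : ℝ => a ^ 2) ((2 : ℕ) * x ^ 1 : ℝ) x := by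
      simpa using hasDerivAt_pow 2 x
    have h3 : HasDerivAt (fun a : ℝ => VE * (1 - a) * a)
        ((VE * (-1)) * x + (VE * (1 - x)) * 1) x :=
      (h1.const_mul VE).mul (hasDerivAt_id x)
    have h4 := ((h2.add h3).const_mul (D ^ 2 / 2)).const_add (E ^ 2 / 2)
    have h5 := h1.mul h4
    convert h5 using 1
    · rfl
    · rfl
    · funext a
      simp only [Pi.mul_apply, Pi.add_apply]
    · simp only [Pi.add_apply]
      push_cast
      ring
  have hcont : ContinuousOn SC (Set.Icc (0 : ℝ) 1) :=
    fun x _ => (hder x).continuousAt.continuousWithinAt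
  apply strictAntiOn_of_deriv_neg (convex_Icc 0 1) hcont
  intro x hx
  rw [interior_Icc] at hx
  obtain ⟨hx0, hx1⟩ := hx
  rw [(hder x).deriv]
  set g : ℝ := VE + 2 * (1 - 2 * VE) * x - 3 * (1 - VE) * x ^ 2 with hg
  have hg1 : g < 1 := by
    have hW : 0 < 1 - VE := by linarith
    nlinarith [mul_nonneg hW.le (sq_nonneg (x - 1)),
      mul_pos hx0 (add_pos_of_nonneg_of_pos (mul_nonneg hW.le hx0.le) hV0)]
  rcases eq_or_lt_of_le hD with hD0 | hD0
  · rw [← hD0]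
    simp only [ne_eq, OfNat.ofNat_ne_zero, not_false_eq_true, zero_pow, zero_div, zero_mul]
    linarith
  · have hD2 : 0 < D ^ 2 := pow_pos hD0 2
    have : D ^ 2 * g < E ^ 2 := by nlinarith
    nlinarith
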